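/- Let Λ, β, ν, γ be positive real constants with ξ₀ := β·Λ/(ν·(ν+γ)) < 1. Let S, I : ℝ → ℝ with S continuous, 0 ≤ S(t) ≤ Λ/ν for all t ≥ 0, I differentiable with I'(t) = (β·S(t) − ν − γ)·I(t) and I(0) > 0. Then I(t) ≤ I(0)·exp((ν+γ)(ξ₀ − 1)·t) for all t ≥ 0, and consequently I(t) → 0 as t → ∞. -/

import Mathlib

theorem infected_extinction_deterministic
    (Λ β ν γ : ℝ) (hΛ : 0 < Λ) (hβ : 0 < β) (hν : 0 < ν) (hγ : 0 < γ)
    (ξ₀ : ℝ) (hξ₀ : ξ₀ = β * Λ / (ν * (ν + γ))) (hξ : ξ₀ < 1)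
    (S I : ℝ → ℝ) (hS : Continuous S)
    (hSbd : ∀ t ≥ (0:ℝ), 0 ≤ S t ∧ S t ≤ Λ / ν)
    (hI : Differentiable ℝ I)
    (hI' : ∀ t ≥ (0:ℝ), deriv I t = (β * S t - ν - γ) * I t)
    (hI0 : 0 < I 0) :
    (∀ t ≥ (0:ℝ), I t ≤ I 0 * Real.exp ((ν + γ) * (ξ₀ - 1) * t)) ∧
      Filter.Tendsto I Filter.atTop (nhds 0) := by
  set a : ℝ := (ν + γ) * (ξ₀ - 1) with ha
  have hνγ : 0 < ν + γ := by linarith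
  have ha_neg : a < 0 := mul_neg_of_pos_of_neg hνγ (by linarith)
  set c : ℝ → ℝ := fun t => β * S t - ν - γ with hc
  have hc_cont : Continuous c := by continuity
  have hca : ∀ t ≥ (0:ℝ), c t ≤ a := by
    intro t ht
    have hSle := (hSbd t ht).2
    have : β * S t ≤ β * (Λ / ν) := by nlinarith
    have key : (ν + γ) * ξ₀ = β * Λ / ν := by
      rw [hξ₀]; field_simp
    simp only [hc, ha]
    nlinarith [mul_div_assoc β Λ ν]
  set u : ℝ → ℝ := fun t => ∫ s in (0:ℝ)..t, c s with hu
  have hu_deriv : ∀ t : ℝ, HasDerivAt u (c t) t := fun t =>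
    (hc_cont.integral_hasStrictDerivAt 0 t).hasDerivAt
  set G : ℝ → ℝ := fun t => I t * Real.exp (-u t) with hG
  have hGderiv : ∀ t ≥ (0:ℝ), HasDerivAt G 0 t := by
    intro t ht
    have h1 : HasDerivAt I ((c t) * I t) t := by
      have := (hI t).hasDerivAt
      rwa [hI' t ht] at this
    have h2 : HasDerivAt (fun t => Real.exp (-u t)) (-(c t) * Real.exp (-u t)) t := by
      have := ((hu_deriv t).neg).exp
      simpa [mul_comm] using this
    have : HasDerivAt (fun y => I y * Real.exp (-u y)) _ t := h1.mul h2
    convert this using 1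
    ring
  have hGconst : ∀ t ≥ (0:ℝ), G t = G 0 := by
    intro t ht
    rcases eq_or_lt_of_le ht with h | h
    · rw [← h]
    · have := constant_of_has_deriv_right_zero
        (f := G) (a := 0) (b := t)
        (fun x hx => ((hGderiv x hx.1).continuousAt.continuousWithinAt))
        (fun x hx => (hGderiv x hx.1).hasDerivWithinAt)
      exact (this t (Set.right_mem_Icc.2 ht))
  have hu0 : u 0 = 0 := by simp [hu]
  have hIeq : ∀ t ≥ (0:ℝ), I t = I 0 * Real.exp (u t) := by
    intro t ht
    have := hGconst t ht
    simp only [hG, hu0, Real.exp_zero, neg_zero, mul_one] at this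
    calc I t = I t * Real.exp (-u t) * Real.exp (u t) := by
                rw [mul_assoc, ← Real.exp_add]; simp
      _ = I 0 * Real.exp (u t) := by rw [this]
  have hule : ∀ t ≥ (0:ℝ), u t ≤ a * t := by
    intro t ht
    have : u t ≤ ∫ _ in (0:ℝ)..t, a := by
      apply intervalIntegral.integral_mono_on ht
        (hc_cont.intervalIntegrable _ _) (intervalIntegrable_const)
      intro x hx
      exact hca x hx.1
    calc u t ≤ ∫ _ in (0:ℝ)..t, a := this
      _ = a * t := by rw [intervalIntegral.integral_const, smul_eq_mul, sub_zero, mul_comm]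
  have hbound : ∀ t ≥ (0:ℝ), I t ≤ I 0 * Real.exp (a * t) := by
    intro t ht
    rw [hIeq t ht]
    exact mul_le_mul_of_nonneg_left (Real.exp_le_exp.2 (hule t ht)) hI0.le
  refine ⟨hbound, ?_⟩
  have hlim : Filter.Tendsto (fun t => I 0 * Real.exp (a * t)) Filter.atTop (nhds 0) := by
    have : Filter.Tendsto (fun t : ℝ => a * t) Filter.atTop Filter.atBot :=
      Filter.Tendsto.const_mul_atTop_of_neg ha_neg Filter.tendsto_id
    simpa using (Real.tendsto_exp_atBot.comp this).const_mul (I 0)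
  apply tendsto_of_tendsto_of_tendsto_of_le_of_le' tendsto_const_nhds hlim
  · filter_upwards [Filter.eventually_ge_atTop (0:ℝ)] with t ht
    rw [hIeq t ht]
    positivity
  · filter_upwards [Filter.eventually_ge_atTop (0:ℝ)] with t ht
    exact hbound t ht
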